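/- arXiv:1804.02999 — 2 statements merged into one kernel-verified Lean document; each statement's English description precedes it below -/
import Mathlib

section
/- Let $G$ be a group, $N$ a normal subgroup of $G$, $d\in\mathbb{N}$, and $A,B\subseteq\{1,\dots,d\}$ with $B$ nonempty. Then $[[G,{}^{|A|}N],\gamma_{|B|}(N)]\leq[G,{}^{|A\cup B|}N]$. -/
/-- The left-normed iterated commutator subgroup `[G, ᵐN]`:
`[G, ⁰N] = G` (i.e. `⊤`) and `[G, ᵐ⁺¹N] = [[G, ᵐN], N]`. -/
def iterComm {G : Type*} [Group G] (N : Subgroup G) : ℕ → Subgroup G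
  | 0 => ⊤
  | m + 1 => ⁅iterComm N m, N⁆

/-- The lower central series of a subgroup `N`, as subgroups of the ambient group:
`γ₁(N) = N` is `gammaN N 0`, and `γ_{l+1}(N) = [γ_l(N), N]` is `gammaN N l`. -/
def gammaN {G : Type*} [Group G] (N : Subgroup G) : ℕ → Subgroup G
  | 0 => N
  | l + 1 => ⁅gammaN N l, N⁆

/-- The general three subgroups lemma: if two of the rotated triple commutators are
contained in a normal subgroup `K`, so is the third. -/
theorem three_subgroups_aux {G : Type*} [Group G] (H₁ H₂ H₃ K : Subgroup G) [K.Normal]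
    (h1 : ⁅⁅H₂, H₃⁆, H₁⁆ ≤ K) (h2 : ⁅⁅H₃, H₁⁆, H₂⁆ ≤ K) : ⁅⁅H₁, H₂⁆, H₃⁆ ≤ K := by
  have key : ∀ H : Subgroup G, H ≤ K ↔ H.map (QuotientGroup.mk' K) = ⊥ := by
    intro H
    rw [Subgroup.map_eq_bot_iff, QuotientGroup.ker_mk']
  rw [key] at h1 h2 ⊢
  rw [Subgroup.map_commutator, Subgroup.map_commutator] at h1 h2 ⊢
  exact Subgroup.commutator_commutator_eq_bot_of_rotate h1 h2

theorem iterComm_normal {G : Type*} [Group G] (N : Subgroup G) [N.Normal] :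
    ∀ m, (iterComm N m).Normal
  | 0 => inferInstanceAs (⊤ : Subgroup G).Normal
  | m + 1 => by
      have := iterComm_normal N m
      exact Subgroup.commutator_normal _ _

theorem iterComm_succ_le {G : Type*} [Group G] (N : Subgroup G) [N.Normal] (m : ℕ) :
    iterComm N (m + 1) ≤ iterComm N m := by
  have := iterComm_normal N m
  exact Subgroup.commutator_le_left _ _

theorem iterComm_le_of_le {G : Type*} [Group G] (N : Subgroup G) [N.Normal] {m k : ℕ}
    (h : m ≤ k) : iterComm N k ≤ iterComm N m := by
  induction h with
  | refl => exact le_rfl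
  | step _ ih => exact le_trans (iterComm_succ_le N _) ih

theorem commutator_iterComm_gammaN_le {G : Type*} [Group G] (N : Subgroup G) [N.Normal] :
    ∀ l a, ⁅iterComm N a, gammaN N l⁆ ≤ iterComm N (a + l + 1)
  | 0, a => le_of_eq rfl
  | l + 1, a => by
      have IH := commutator_iterComm_gammaN_le N l
      show ⁅iterComm N a, ⁅gammaN N l, N⁆⁆ ≤ iterComm N (a + l + 2)
      rw [Subgroup.commutator_comm]
      have := iterComm_normal N (a + l + 2)
      apply three_subgroups_aux
      · -- ⁅⁅N, iterComm a⁆, gammaN l⁆ ≤ _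
        rw [Subgroup.commutator_comm N (iterComm N a)]
        show ⁅iterComm N (a + 1), gammaN N l⁆ ≤ _
        calc ⁅iterComm N (a + 1), gammaN N l⁆ ≤ iterComm N (a + 1 + l + 1) := IH (a + 1)
          _ = iterComm N (a + l + 2) := by ring_nf
      · -- ⁅⁅iterComm a, gammaN l⁆, N⁆ ≤ _
        calc ⁅⁅iterComm N a, gammaN N l⁆, N⁆ ≤ ⁅iterComm N (a + l + 1), N⁆ :=
              Subgroup.commutator_mono (IH a) le_rfl
          _ = iterComm N (a + l + 2) := rfl

/-- **Lemma (KL) (2).** For a normal subgroup `N ⊴ G` and `A, B ⊆ [d]` with `B ≠ ∅`: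
`[[G, ^{|A|}N], γ_{|B|}(N)] ≤ [G, ^{|A ∪ B|}N]`. -/
theorem commutator_iterComm_gammaN_card_le
    {G : Type*} [Group G] (N : Subgroup G) [N.Normal] {d : ℕ} (hd : 0 < d)
    (A B : Finset (Fin d)) (hB : B.Nonempty) :
    ⁅iterComm N A.card, gammaN N (B.card - 1)⁆ ≤ iterComm N (A ∪ B).card := by
  have hBc : 1 ≤ B.card := Finset.Nonempty.card_pos hB
  have h1 : (A ∪ B).card ≤ A.card + (B.card - 1) + 1 := by
    have := Finset.card_union_le A B
    omega
  calc ⁅iterComm N A.card, gammaN N (B.card - 1)⁆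
      ≤ iterComm N (A.card + (B.card - 1) + 1) := commutator_iterComm_gammaN_le N _ _
    _ ≤ iterComm N (A ∪ B).card := iterComm_le_of_le N h1
end

section
/- With $\mathbb{F}=\mathbb{F}_4$ and $H$, $M$, $N$, $G=HM$ the subgroups of $\mathrm{SL}_6(\mathbb{F})$ defined below, the commutator subgroup $[[G,N],N]$ is strictly contained in $[N,N]$. (In fact $[[G,N],N]$ is trivial while $[N,N]$ consists of all block matrices with identity diagonal blocks, zero blocks in positions $(1,2)$ and $(2,3)$, and a scalar block $d\cdot I$, $d\in\mathbb{F}$, in position $(1,3)$.) -/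
/-- The group `SL₆(F)`, with rows and columns indexed by `Fin 3 × Fin 2`, so that
its elements can be viewed as `3 × 3` block matrices with `2 × 2` blocks. -/
abbrev SL6 (F : Type*) [Field F] [Fintype F] : Type _ :=
  Matrix.SpecialLinearGroup (Fin 3 × Fin 2) F

/-- Assemble a `3 × 3` array of `2 × 2` blocks into a `6 × 6` matrix. -/
def blk3 {F : Type*} [Field F] (f : Fin 3 → Fin 3 → Matrix (Fin 2) (Fin 2) F) :
    Matrix (Fin 3 × Fin 2) (Fin 3 × Fin 2) F :=
  Matrix.of fun p q => f p.1 q.1 p.2 q.2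

/-- The subgroup `H` of `SL₆(F)`: block diagonal matrices `diag(A, A, A)` with
`A ∈ SL₂(F)`. -/
def Hset (F : Type*) [Field F] [Fintype F] : Set (SL6 F) :=
  {X | ∃ A : Matrix.SpecialLinearGroup (Fin 2) F,
    (X : Matrix (Fin 3 × Fin 2) (Fin 3 × Fin 2) F) =
      blk3 ![![(A : Matrix (Fin 2) (Fin 2) F), 0, 0],
              ![0, (A : Matrix (Fin 2) (Fin 2) F), 0],
              ![0, 0, (A : Matrix (Fin 2) (Fin 2) F)]]}

/-- The subgroup `M` of `SL₆(F)`: block upper unitriangular matrices with blocks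
`B` (position (1,2)), `C` (position (2,3)) of trace `0` and an arbitrary block `D`
(position (1,3)). -/
def Mset (F : Type*) [Field F] [Fintype F] : Set (SL6 F) :=
  {X | ∃ B C D : Matrix (Fin 2) (Fin 2) F, B.trace = 0 ∧ C.trace = 0 ∧
    (X : Matrix (Fin 3 × Fin 2) (Fin 3 × Fin 2) F) =
      blk3 ![![1, B, D], ![0, 1, C], ![0, 0, 1]]}

/-- The subgroup `N` of `SL₆(F)`: elements of `M` whose blocks in positions (1,2)
and (2,3) are scalar matrices `b•I` and `c•I`. -/
def Nset (F : Type*) [Field F] [Fintype F] : Set (SL6 F) :=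
  {X | ∃ (b c : F) (D : Matrix (Fin 2) (Fin 2) F),
    (X : Matrix (Fin 3 × Fin 2) (Fin 3 × Fin 2) F) =
      blk3 ![![1, b • 1, D], ![0, 1, c • 1], ![0, 0, 1]]}

/-- The group `G = HM`, i.e. the subgroup of `SL₆(F)` generated by `H ∪ M`. -/
def Gsub (F : Type*) [Field F] [Fintype F] : Subgroup (SL6 F) :=
  Subgroup.closure (Hset F ∪ Mset F)

open scoped commutatorElement

section Aux
set_option linter.unusedSectionVars false
variable {F : Type*} [Field F] [Fintype F]

local notation "M2" => Matrix (Fin 2) (Fin 2) F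
local notation "M6" => Matrix (Fin 3 × Fin 2) (Fin 3 × Fin 2) F

/-- A block upper triangular matrix with constant diagonal block `A`. -/
def utri (A B C D : M2) : M6 := blk3 ![![A, B, D], ![0, A, C], ![0, 0, A]]

lemma blk3_mul (f g : Fin 3 → Fin 3 → M2) :
    blk3 f * blk3 g = blk3 (fun i k => ∑ j, f i j * g j k) := by
  ext ⟨i, a⟩ ⟨k, b⟩
  simp [blk3, Matrix.mul_apply, Fintype.sum_prod_type, Matrix.sum_apply]

lemma blk3_congr {f g : Fin 3 → Fin 3 → M2} (h : ∀ i k, f i k = g i k) :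
    blk3 f = blk3 g := by
  ext ⟨i, a⟩ ⟨k, b⟩; simp [blk3, h]

lemma utri_congr {A B C D A' B' C' D' : M2} (h1 : A = A') (h2 : B = B') (h3 : C = C')
    (h4 : D = D') : utri A B C D = utri A' B' C' D' := by subst h1 h2 h3 h4; rfl

lemma utri_mul (A B C D A' B' C' D' : M2) :
    utri A B C D * utri A' B' C' D' =
      utri (A * A') (A * B' + B * A') (A * C' + C * A') (A * D' + B * C' + D * A') := by
  rw [utri, utri, utri, blk3_mul]
  refine blk3_congr fun i k => ?_
  fin_cases i <;> fin_cases k <;>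
    simp [Fin.sum_univ_three, Matrix.vecHead, Matrix.vecTail]

lemma utri_one : utri (1 : M2) 0 0 0 = (1 : M6) := by
  ext ⟨i, a⟩ ⟨k, b⟩
  fin_cases i <;> fin_cases k <;>
    simp [utri, blk3, Matrix.one_apply, Prod.ext_iff, Matrix.vecHead, Matrix.vecTail]

open Matrix in
lemma det_utri1 (B C D : M2) : (utri (1 : M2) B C D).det = 1 := by
  classical
  have hbt : (utri (1 : M2) B C D).BlockTriangular Prod.fst := by
    rintro ⟨i, a⟩ ⟨k, b⟩ h
    simp only [] at h
    fin_cases i <;> fin_cases k <;>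
      simp_all [utri, blk3, Matrix.vecHead, Matrix.vecTail] <;> omega
  rw [hbt.det_fintype]
  have hsq : ∀ k : Fin 3, (utri (1 : M2) B C D).toSquareBlock Prod.fst k = 1 := by
    intro k
    fin_cases k <;>
      · ext ⟨⟨i, a⟩, hp⟩ ⟨⟨j, b⟩, hq⟩
        obtain rfl : i = _ := hp
        obtain rfl : j = _ := hq
        simp [Matrix.toSquareBlock_def, utri, blk3, Matrix.one_apply, Subtype.ext_iff,
          Prod.ext_iff, Matrix.vecHead, Matrix.vecTail]
  simp [hsq]

/-- The elements of `N`, packaged as elements of `SL₆`. -/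
def nElt (b c : F) (D : M2) : SL6 F := ⟨utri 1 (b • 1) (c • 1) D, det_utri1 _ _ _⟩

lemma nElt_mem (b c : F) (D : M2) : nElt b c D ∈ Nset F := ⟨b, c, D, rfl⟩

lemma coe_inv_eq {X : SL6 F} {Y : M6} (h : (X : M6) * Y = 1) :
    ((X⁻¹ : SL6 F) : M6) = Y := by
  have h1 : ((X⁻¹ * X : SL6 F) : M6) = 1 := by
    rw [inv_mul_cancel]; exact Matrix.SpecialLinearGroup.coe_one
  calc ((X⁻¹ : SL6 F) : M6) = ((X⁻¹ : SL6 F) : M6) * ((X : M6) * Y) := by rw [h, mul_one]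
    _ = (((X⁻¹ * X : SL6 F)) : M6) * Y := by
        rw [Matrix.SpecialLinearGroup.coe_mul, mul_assoc]
    _ = Y := by rw [h1, one_mul]

/-- The subgroup `Z` of corner-block matrices. -/
def Zsub : Subgroup (SL6 F) where
  carrier := {X | ∃ E : Matrix (Fin 2) (Fin 2) F,
    (X : Matrix (Fin 3 × Fin 2) (Fin 3 × Fin 2) F) = utri 1 0 0 E}
  one_mem' := ⟨0, by rw [Matrix.SpecialLinearGroup.coe_one, utri_one]⟩
  mul_mem' := by
    rintro x y ⟨E, hE⟩ ⟨E', hE'⟩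
    refine ⟨E' + E, ?_⟩
    rw [Matrix.SpecialLinearGroup.coe_mul, hE, hE', utri_mul]
    exact utri_congr (by simp) (by simp) (by simp) (by simp)
  inv_mem' := by
    rintro x ⟨E, hE⟩
    refine ⟨-E, coe_inv_eq ?_⟩
    rw [hE, utri_mul, ← utri_one]
    exact utri_congr (by simp) (by simp) (by simp) (by simp)

/-- `N` as a subgroup. -/
def Nsub : Subgroup (SL6 F) where
  carrier := Nset F
  one_mem' := ⟨0, 0, 0, by
    rw [Matrix.SpecialLinearGroup.coe_one, ← utri_one]
    exact (utri_congr rfl (by simp) (by simp) rfl)⟩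
  mul_mem' := by
    rintro x y ⟨b, c, D, hD⟩ ⟨b', c', D', hD'⟩
    refine ⟨b + b', c + c', 1 * D' + (b • 1) * (c' • 1) + D * 1, ?_⟩
    show ((x * y : SL6 F) : M6) = utri 1 ((b + b') • 1) ((c + c') • 1) _
    rw [Matrix.SpecialLinearGroup.coe_mul, hD, hD']
    show utri 1 (b • 1) (c • 1) D * utri 1 (b' • 1) (c' • 1) D' = _
    rw [utri_mul]
    exact utri_congr (by simp) (by simp [add_smul]; try abel) (by simp [add_smul]; try abel) rfl
  inv_mem' := by
    rintro x ⟨b, c, D, hD⟩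
    refine ⟨-b, -c, (b • 1) * (c • 1) - D, ?_⟩
    show ((x⁻¹ : SL6 F) : M6) = utri 1 ((-b) • 1) ((-c) • 1) _
    rw [neg_smul, neg_smul]
    refine coe_inv_eq ?_
    rw [hD]
    show utri 1 (b • 1) (c • 1) D * utri 1 (-(b • 1)) (-(c • 1)) ((b • 1) * (c • 1) - D) = 1
    rw [utri_mul, ← utri_one]
    exact utri_congr (by simp) (by simp) (by simp)
      (by simp [mul_neg, sub_eq_add_neg, add_mul, mul_add]; try abel)

lemma hset_val {g : SL6 F} (hg : g ∈ Hset F) :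
    ∃ a a' : M2, a * a' = 1 ∧ a' * a = 1 ∧
      (g : M6) = utri a 0 0 0 ∧ ((g⁻¹ : SL6 F) : M6) = utri a' 0 0 0 := by
  obtain ⟨A, hA⟩ := hg
  have h1 : ((A : M2)) * ((A⁻¹ : Matrix.SpecialLinearGroup (Fin 2) F) : M2) = 1 := by
    rw [← Matrix.SpecialLinearGroup.coe_mul, mul_inv_cancel,
      Matrix.SpecialLinearGroup.coe_one]
  have h2 : ((A⁻¹ : Matrix.SpecialLinearGroup (Fin 2) F) : M2) * (A : M2) = 1 := by
    rw [← Matrix.SpecialLinearGroup.coe_mul, inv_mul_cancel,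
      Matrix.SpecialLinearGroup.coe_one]
  refine ⟨A, (A⁻¹ : Matrix.SpecialLinearGroup (Fin 2) F), h1, h2, hA, coe_inv_eq ?_⟩
  rw [hA]
  show utri (A : M2) 0 0 0 * utri ((A⁻¹ : Matrix.SpecialLinearGroup (Fin 2) F) : M2) 0 0 0 = 1
  rw [utri_mul, ← utri_one]
  exact utri_congr h1 (by simp) (by simp) (by simp)

lemma mset_val {g : SL6 F} {B C D : M2} (hg : (g : M6) = utri 1 B C D) :
    ((g⁻¹ : SL6 F) : M6) = utri 1 (-B) (-C) (B * C - D) := by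
  refine coe_inv_eq ?_
  rw [hg, utri_mul, ← utri_one]
  exact utri_congr (by simp) (by simp) (by simp)
    (by simp [mul_neg, sub_eq_add_neg, add_mul, mul_add]; try abel)

/-- conjugation by a block-diagonal element preserves `Z`. -/
lemma conjZ_diag {g z : SL6 F} {a a' : M2} (ha : a * a' = 1)
    (hg : (g : M6) = utri a 0 0 0) (hg' : ((g⁻¹ : SL6 F) : M6) = utri a' 0 0 0)
    (hz : z ∈ Zsub) : g * z * g⁻¹ ∈ Zsub := by
  obtain ⟨E, hE⟩ := hz
  refine ⟨a * E * a', ?_⟩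
  rw [Matrix.SpecialLinearGroup.coe_mul, Matrix.SpecialLinearGroup.coe_mul,
    hg, hE, hg', utri_mul, utri_mul]
  exact utri_congr (by simp [ha]) (by simp) (by simp) (by simp [mul_assoc])

/-- conjugation by a unitriangular element preserves `Z`. -/
lemma conjZ_tri {g z : SL6 F} {B C D : M2} (hg : (g : M6) = utri 1 B C D)
    (hz : z ∈ Zsub) : g * z * g⁻¹ ∈ Zsub := by
  obtain ⟨E, hE⟩ := hz
  refine ⟨E, ?_⟩
  rw [Matrix.SpecialLinearGroup.coe_mul, Matrix.SpecialLinearGroup.coe_mul,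
    hg, hE, mset_val hg, utri_mul, utri_mul]
  exact utri_congr (by simp) (by simp) (by simp)
    (by simp [mul_neg, sub_eq_add_neg, add_mul, mul_add]; try abel)

lemma normalizer_of_conj {g : SL6 F}
    (h1 : ∀ z : SL6 F, z ∈ Zsub → g * z * g⁻¹ ∈ Zsub)
    (h2 : ∀ z : SL6 F, z ∈ Zsub → g⁻¹ * z * g ∈ Zsub) :
    g ∈ Subgroup.normalizer ((Zsub : Subgroup (SL6 F)) : Set (SL6 F)) := by
  rw [Subgroup.mem_normalizer_iff]
  intro h
  constructor
  · exact h1 h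
  · intro hh
    have : h = g⁻¹ * (g * h * g⁻¹) * g := by group
    rw [this]
    exact h2 _ hh

/-- commutator of a diagonal element with an `N`-element lands in `Z`. -/
lemma commH {g n : SL6 F} {a a' : M2} {b c : F} {E : M2} (ha : a * a' = 1)
    (hg : (g : M6) = utri a 0 0 0) (hg' : ((g⁻¹ : SL6 F) : M6) = utri a' 0 0 0)
    (hn : (n : M6) = utri 1 (b • 1) (c • 1) E) : ⁅g, n⁆ ∈ Zsub := by
  refine ⟨a * E * a' - E, ?_⟩
  rw [commutatorElement_def, Matrix.SpecialLinearGroup.coe_mul,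
    Matrix.SpecialLinearGroup.coe_mul, Matrix.SpecialLinearGroup.coe_mul,
    hg, hn, hg', mset_val hn, utri_mul, utri_mul, utri_mul]
  refine utri_congr (by simp [ha]) ?_ ?_ ?_
  · simp [mul_smul_comm, smul_mul_assoc, ha]
  · simp [mul_smul_comm, smul_mul_assoc, ha]
  · simp [mul_smul_comm, smul_mul_assoc, ha, smul_smul, mul_neg, sub_eq_add_neg,
      smul_neg, add_mul, mul_add, mul_assoc]
    try abel

/-- commutator of a unitriangular element with an `N`-element lands in `Z`. -/
lemma commM {g n : SL6 F} {B C D : M2} {b c : F} {E : M2}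
    (hg : (g : M6) = utri 1 B C D)
    (hn : (n : M6) = utri 1 (b • 1) (c • 1) E) : ⁅g, n⁆ ∈ Zsub := by
  refine ⟨c • B - b • C, ?_⟩
  rw [commutatorElement_def, Matrix.SpecialLinearGroup.coe_mul,
    Matrix.SpecialLinearGroup.coe_mul, Matrix.SpecialLinearGroup.coe_mul,
    hg, hn, mset_val hg, mset_val hn, utri_mul, utri_mul, utri_mul]
  refine utri_congr (by simp) (by simp) (by simp) ?_
  simp [mul_smul_comm, smul_mul_assoc, smul_smul, mul_neg, neg_mul, sub_eq_add_neg,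
    smul_neg, add_mul, mul_add, mul_assoc]
  try abel

end Aux

/-- **Lemma SL6 (4).** `[[G, N], N]` is strictly contained in `[N, N]`
(as subgroups of `SL₆(𝔽₄)`, with `N` the subgroup generated by the set `N`). -/
theorem commutator_GNN_lt_commutator_NN
    (F : Type*) [Field F] [Fintype F] (hF : Fintype.card F = 4) :
    ⁅⁅Gsub F, Subgroup.closure (Nset F)⁆, Subgroup.closure (Nset F)⁆ <
      ⁅Subgroup.closure (Nset F), Subgroup.closure (Nset F)⁆ := by
  classical
  have hNle : Subgroup.closure (Nset F) ≤ Nsub :=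
    (Subgroup.closure_le _).mpr (fun x hx => hx)
  -- [G, N] ≤ Z
  have hGZ : ⁅Gsub F, Subgroup.closure (Nset F)⁆ ≤ Zsub := by
    rw [Subgroup.commutator_le]
    intro g hg n hn
    obtain ⟨b, c, E, hnval⟩ := hNle hn
    have hnval' : (n : Matrix (Fin 3 × Fin 2) (Fin 3 × Fin 2) F) = utri 1 (b • 1) (c • 1) E :=
      hnval
    have key : ∀ x ∈ Gsub F, x ∈ Subgroup.normalizer ((Zsub : Subgroup (SL6 F)) : Set (SL6 F)) ∧ ⁅x, n⁆ ∈ Zsub := by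
      intro x hx
      induction hx using Subgroup.closure_induction with
      | mem x hxm =>
        rcases hxm with hH | hM
        · obtain ⟨a, a', ha, ha', hx1, hx2⟩ := hset_val hH
          refine ⟨normalizer_of_conj (fun z hz => conjZ_diag ha hx1 hx2 hz) ?_,
            commH ha hx1 hx2 hnval'⟩
          intro z hz
          have h3 : x⁻¹ * z * x = x⁻¹ * z * (x⁻¹)⁻¹ := by rw [inv_inv]
          rw [h3]
          refine conjZ_diag ha' hx2 ?_ hz
          rw [inv_inv]; exact hx1
        · obtain ⟨B, C, D, _, _, hx1⟩ := hM
          have hx1' : (x : Matrix (Fin 3 × Fin 2) (Fin 3 × Fin 2) F) = utri 1 B C D := hx1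
          refine ⟨normalizer_of_conj (fun z hz => conjZ_tri hx1' hz) ?_, commM hx1' hnval'⟩
          intro z hz
          have h3 : x⁻¹ * z * x = x⁻¹ * z * (x⁻¹)⁻¹ := by rw [inv_inv]
          rw [h3]
          exact conjZ_tri (mset_val hx1') hz
      | one =>
        refine ⟨(Subgroup.normalizer ((Zsub : Subgroup (SL6 F)) : Set (SL6 F))).one_mem, ?_⟩
        have : ⁅(1 : SL6 F), n⁆ = 1 := by group
        rw [this]; exact (Zsub).one_mem
      | mul x y hx hy ihx ihy =>
        refine ⟨mul_mem ihx.1 ihy.1, ?_⟩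
        have hcomm : ⁅x * y, n⁆ = x * ⁅y, n⁆ * x⁻¹ * ⁅x, n⁆ := by group
        rw [hcomm]
        exact mul_mem ((Subgroup.mem_normalizer_iff.mp ihx.1 _).mp ihy.2) ihx.2
      | inv x hx ihx =>
        refine ⟨inv_mem ihx.1, ?_⟩
        have hcomm : ⁅x⁻¹, n⁆ = x⁻¹ * ⁅x, n⁆⁻¹ * (x⁻¹)⁻¹ := by group
        rw [hcomm]
        exact (Subgroup.mem_normalizer_iff.mp (inv_mem ihx.1) _).mp (inv_mem ihx.2)
    exact (key g hg).2
  -- Z centralizes N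
  have hZcent : Zsub ≤ Subgroup.centralizer (Subgroup.closure (Nset F) : Set (SL6 F)) := by
    intro z hz
    rw [Subgroup.mem_centralizer_iff]
    intro m hm
    obtain ⟨b, c, E, hmv⟩ := hNle hm
    have hmv' : (m : Matrix (Fin 3 × Fin 2) (Fin 3 × Fin 2) F) = utri 1 (b • 1) (c • 1) E :=
      hmv
    obtain ⟨D, hzv⟩ := hz
    apply Subtype.ext
    show ((m * z : SL6 F) : Matrix (Fin 3 × Fin 2) (Fin 3 × Fin 2) F) = ((z * m : SL6 F) : _)
    rw [Matrix.SpecialLinearGroup.coe_mul, Matrix.SpecialLinearGroup.coe_mul, hmv', hzv,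
      utri_mul, utri_mul]
    exact utri_congr (by simp) (by simp) (by simp) (by simp; try abel)
  have hbot : ⁅⁅Gsub F, Subgroup.closure (Nset F)⁆, Subgroup.closure (Nset F)⁆ = ⊥ :=
    Subgroup.commutator_eq_bot_iff_le_centralizer.mpr (hGZ.trans hZcent)
  rw [hbot, bot_lt_iff_ne_bot]
  intro hcomm
  have h1 : nElt (1 : F) 0 (0 : Matrix (Fin 2) (Fin 2) F) ∈ Subgroup.closure (Nset F) :=
    Subgroup.subset_closure (nElt_mem _ _ _)
  have h2 : nElt (0 : F) 1 (0 : Matrix (Fin 2) (Fin 2) F) ∈ Subgroup.closure (Nset F) :=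
    Subgroup.subset_closure (nElt_mem _ _ _)
  have h3 := Subgroup.commutator_mem_commutator h1 h2
  rw [hcomm, Subgroup.mem_bot] at h3
  have h4 : nElt (1 : F) 0 (0 : Matrix (Fin 2) (Fin 2) F) * nElt 0 1 0
      = nElt 0 1 0 * nElt 1 0 0 := commutatorElement_eq_one_iff_mul_comm.mp h3
  have h5 := congrArg (fun X : SL6 F =>
    (X : Matrix (Fin 3 × Fin 2) (Fin 3 × Fin 2) F) ((0 : Fin 3), (0 : Fin 2))
      ((2 : Fin 3), (0 : Fin 2))) h4
  simp only [Matrix.SpecialLinearGroup.coe_mul] at h5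
  rw [show ((nElt (1 : F) 0 0 : SL6 F) : Matrix (Fin 3 × Fin 2) (Fin 3 × Fin 2) F)
      = utri 1 ((1:F) • 1) ((0:F) • 1) 0 from rfl,
    show ((nElt (0 : F) 1 0 : SL6 F) : Matrix (Fin 3 × Fin 2) (Fin 3 × Fin 2) F)
      = utri 1 ((0:F) • 1) ((1:F) • 1) 0 from rfl, utri_mul, utri_mul] at h5
  simp [utri, blk3, Matrix.vecHead, Matrix.vecTail, Matrix.one_apply] at h5
end
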